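/- Let W ∈ Matrix (Fin n) (Fin n) ℝ be symmetric positive semidefinite, and let D ∈ Matrix (Fin m) (Fin n) ℝ, G ∈ Matrix (Fin q) (Fin n) ℝ satisfy: W.mulVec h = 0 implies D.mulVec h = 0 and G.mulVec h = 0. Then the infimum over ALL functions Ψ : ℝ^m → ℝ^q (not necessarily linear) of sup{ ‖G.mulVec h − Ψ(D.mulVec h)‖₂ / √(hᵀWh) : h ∈ ℝ^n, hᵀWh > 0 } equals sup{ ‖G.mulVec h‖₂ / √(hᵀWh) : h ∈ ℝ^n, D.mulVec h = 0, hᵀWh > 0 }. -/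

import Mathlib

open Matrix

lemma sqrtSum_eq_norm {k : ℕ} (x : Fin k → ℝ) :
    Real.sqrt (∑ i, x i ^ 2) = ‖(WithLp.linearEquiv 2 ℝ (Fin k → ℝ)).symm x‖ := by
  rw [show ((WithLp.linearEquiv 2 ℝ (Fin k → ℝ)).symm x : EuclideanSpace ℝ (Fin k))
      = (WithLp.equiv 2 (Fin k → ℝ)).symm x from rfl]
  rw [EuclideanSpace.norm_eq]
  congr 1
  refine Finset.sum_congr rfl fun i _ => ?_
  rw [WithLp.equiv_symm_apply, WithLp.ofLp_toLp, Real.norm_eq_abs, sq_abs]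

open scoped MatrixOrder in
lemma psd_sqrt_exists {n : ℕ} (W : Matrix (Fin n) (Fin n) ℝ) (hWpsd : W.PosSemidef) :
    ∃ B : Matrix (Fin n) (Fin n) ℝ, Bᵀ = B ∧ B * B = W := by
  have hW0 : 0 ≤ W := Matrix.nonneg_iff_posSemidef.mpr hWpsd
  refine ⟨CFC.sqrt W, ?_, CFC.sqrt_mul_sqrt_self W hW0⟩
  have := (CFC.sqrt_nonneg W).posSemidef.1.eq
  rwa [conjTranspose_eq_transpose_of_trivial] at this

/-- **Nonlinear optimality of the linear predictor.** The infimum over all (not necessarily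
linear) predictors `Ψ : ℝ^m → ℝ^q` of the normalized worst-case error
`sup ‖G h − Ψ(D h)‖₂ / √(hᵀWh)` equals the worst normalized test motion among directions
invisible in training displacement, `sup { ‖G h‖₂ / √(hᵀWh) : D h = 0 }`
(suprema in `[0,∞]`, empty supremum `0`). -/
theorem nonlinear_optimality {m n q : ℕ}
    (W : Matrix (Fin n) (Fin n) ℝ) (hWsymm : W.IsSymm) (hWpsd : W.PosSemidef)
    (D : Matrix (Fin m) (Fin n) ℝ) (G : Matrix (Fin q) (Fin n) ℝ)
    (hker : ∀ h : Fin n → ℝ, W.mulVec h = 0 → D.mulVec h = 0 ∧ G.mulVec h = 0) :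
    (⨅ Ψ : (Fin m → ℝ) → (Fin q → ℝ),
        ⨆ (h : Fin n → ℝ) (_ : 0 < h ⬝ᵥ W.mulVec h),
          ENNReal.ofReal
            (Real.sqrt (∑ i, (G.mulVec h i - Ψ (D.mulVec h) i) ^ 2)
              / Real.sqrt (h ⬝ᵥ W.mulVec h)))
      = ⨆ (h : Fin n → ℝ) (_ : D.mulVec h = 0) (_ : 0 < h ⬝ᵥ W.mulVec h),
          ENNReal.ofReal
            (Real.sqrt (∑ i, (G.mulVec h i) ^ 2) / Real.sqrt (h ⬝ᵥ W.mulVec h)) := by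
  classical
  obtain ⟨B, hBsymm, hBmul⟩ := psd_sqrt_exists W hWpsd
  have hBW : ∀ v : Fin n → ℝ, v ⬝ᵥ W.mulVec v = (B.mulVec v) ⬝ᵥ (B.mulVec v) := by
    intro v
    conv_lhs => rw [← hBmul, ← mulVec_mulVec, dotProduct_mulVec,
      ← mulVec_transpose, hBsymm]
  have hWnn : ∀ v : Fin n → ℝ, 0 ≤ v ⬝ᵥ W.mulVec v := by
    intro v
    have := hWpsd.re_dotProduct_nonneg v
    simpa using this
  set Blin : (Fin n → ℝ) →ₗ[ℝ] EuclideanSpace ℝ (Fin n) :=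
    (WithLp.linearEquiv 2 ℝ (Fin n → ℝ)).symm.toLinearMap ∘ₗ B.mulVecLin with hBlindef
  have hBlin : ∀ v : Fin n → ℝ, ‖Blin v‖ = Real.sqrt (v ⬝ᵥ W.mulVec v) := by
    intro v
    have h1 : Blin v = (WithLp.linearEquiv 2 ℝ (Fin n → ℝ)).symm (B.mulVec v) := rfl
    rw [h1, ← sqrtSum_eq_norm, hBW]
    congr 1
    simp [dotProduct, sq]
  -- the right-hand side
  set R : ENNReal := ⨆ (h : Fin n → ℝ) (_ : D.mulVec h = 0) (_ : 0 < h ⬝ᵥ W.mulVec h),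
      ENNReal.ofReal
        (Real.sqrt (∑ i, (G.mulVec h i) ^ 2) / Real.sqrt (h ⬝ᵥ W.mulVec h)) with hRdef
  have keyA : ∀ v : Fin n → ℝ, D.mulVec v = 0 →
      ENNReal.ofReal (Real.sqrt (∑ i, (G.mulVec v i) ^ 2))
        ≤ R * ENNReal.ofReal (Real.sqrt (v ⬝ᵥ W.mulVec v)) := by
    intro v hv
    rcases eq_or_lt_of_le (hWnn v) with h0 | hpos
    · have hWv : W.mulVec v = 0 := by
        refine (hWpsd.dotProduct_mulVec_zero_iff v).mp ?_
        simpa [star_trivial] using h0.symm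
      have hGv : G.mulVec v = 0 := (hker v hWv).2
      simp [hGv]
    · have hterm : ENNReal.ofReal
          (Real.sqrt (∑ i, (G.mulVec v i) ^ 2) / Real.sqrt (v ⬝ᵥ W.mulVec v)) ≤ R := by
        rw [hRdef]
        exact le_iSup_of_le v (le_iSup_of_le hv (le_iSup_of_le hpos le_rfl))
      have hsp : 0 < Real.sqrt (v ⬝ᵥ W.mulVec v) := Real.sqrt_pos.mpr hpos
      have hid : Real.sqrt (∑ i, (G.mulVec v i) ^ 2)
          = Real.sqrt (∑ i, (G.mulVec v i) ^ 2) / Real.sqrt (v ⬝ᵥ W.mulVec v)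
            * Real.sqrt (v ⬝ᵥ W.mulVec v) := by
        field_simp
      rw [hid, ENNReal.ofReal_mul (by positivity)]
      exact mul_le_mul_left hterm _
  apply le_antisymm
  · -- construct the optimal predictor
    set S : Submodule ℝ (EuclideanSpace ℝ (Fin n)) :=
      (LinearMap.ker D.mulVecLin).map Blin with hSdef
    set Ψ : (Fin m → ℝ) → (Fin q → ℝ) := fun y =>
      if hy : ∃ hh : Fin n → ℝ, D.mulVec hh = y then
        G.mulVec (hy.choose -
          (Submodule.mem_map.mp
            (S.orthogonalProjectionOnto (Blin hy.choose)).2).choose)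
      else 0 with hΨdef
    refine iInf_le_of_le Ψ (iSup_le fun h' => iSup_le fun hw' => ?_)
    have hy : ∃ hh : Fin n → ℝ, D.mulVec hh = D.mulVec h' := ⟨h', rfl⟩
    set h0 := hy.choose with hh0def
    have hh0 : D.mulVec h0 = D.mulVec h' := hy.choose_spec
    set kk := (Submodule.mem_map.mp
      (S.orthogonalProjectionOnto (Blin h0)).2).choose with hkkdef
    obtain ⟨hk1, hk2⟩ := (Submodule.mem_map.mp
      (S.orthogonalProjectionOnto (Blin h0)).2).choose_spec
    have hΨval : Ψ (D.mulVec h') = G.mulVec (h0 - kk) := dif_pos hy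
    have hDk : D.mulVec kk = 0 := by
      have := LinearMap.mem_ker.mp hk1
      simpa [mulVecLin_apply, hkkdef] using this
    set z := h' - (h0 - kk) with hzdef
    have hDz : D.mulVec z = 0 := by
      simp [hzdef, mulVec_sub, hDk, hh0]
    have hGerr : ∀ i, G.mulVec h' i - Ψ (D.mulVec h') i = G.mulVec z i := by
      intro i
      rw [hΨval]
      simp [hzdef, mulVec_sub]
    have hBz_mem : Blin z ∈ S := by
      refine Submodule.mem_map_of_mem ?_
      rw [LinearMap.mem_ker]
      simpa [mulVecLin_apply] using hDz
    have hr_mem : Blin h0 - ↑(S.orthogonalProjectionOnto (Blin h0)) ∈ Sᗮ :=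
      Submodule.sub_starProjection_mem_orthogonal _
    have hdecomp : Blin h' = Blin z + (Blin h0 - ↑(S.orthogonalProjectionOnto (Blin h0))) := by
      rw [← hk2]
      simp [hzdef, map_sub, hkkdef]
    have hinner : inner ℝ (Blin z) (Blin h0 - ↑(S.orthogonalProjectionOnto (Blin h0))) = (0 : ℝ) :=
      Submodule.inner_right_of_mem_orthogonal hBz_mem hr_mem
    have hnorm : ‖Blin z‖ ≤ ‖Blin h'‖ := by
      have h2 : ‖Blin h'‖ ^ 2 = ‖Blin z‖ ^ 2
          + ‖Blin h0 - ↑(S.orthogonalProjectionOnto (Blin h0))‖ ^ 2 := by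
        rw [hdecomp, norm_add_sq_real, hinner]
        ring
      nlinarith [norm_nonneg (Blin z), norm_nonneg (Blin h'),
        sq_nonneg ‖Blin h0 - ↑(S.orthogonalProjectionOnto (Blin h0))‖]
    have hsqle : Real.sqrt (z ⬝ᵥ W.mulVec z) ≤ Real.sqrt (h' ⬝ᵥ W.mulVec h') := by
      rw [← hBlin, ← hBlin]; exact hnorm
    have hsp : 0 < Real.sqrt (h' ⬝ᵥ W.mulVec h') := Real.sqrt_pos.mpr hw'
    have hstep : ENNReal.ofReal
        (Real.sqrt (∑ i, (G.mulVec h' i - Ψ (D.mulVec h') i) ^ 2)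
          / Real.sqrt (h' ⬝ᵥ W.mulVec h'))
        = ENNReal.ofReal (Real.sqrt (∑ i, (G.mulVec z i) ^ 2))
            / ENNReal.ofReal (Real.sqrt (h' ⬝ᵥ W.mulVec h')) := by
      rw [ENNReal.ofReal_div_of_pos hsp]
      congr 3
      exact Finset.sum_congr rfl fun i _ => by rw [hGerr i]
    rw [hstep, ENNReal.div_le_iff_le_mul
      (Or.inl (ne_of_gt (ENNReal.ofReal_pos.mpr hsp)))
      (Or.inl ENNReal.ofReal_ne_top)]
    exact (keyA z hDz).trans
      (mul_le_mul_right (ENNReal.ofReal_le_ofReal hsqle) R)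
  · -- lower bound: every predictor is at least as bad
    refine le_iInf fun Ψ => iSup_le fun h => iSup_le fun hDh => iSup_le fun hw => ?_
    have hw' : 0 < (-h) ⬝ᵥ W.mulVec (-h) := by
      simpa [mulVec_neg, dotProduct_neg, neg_dotProduct] using hw
    have hsp : 0 < Real.sqrt (h ⬝ᵥ W.mulVec h) := Real.sqrt_pos.mpr hw
    set el := (WithLp.linearEquiv 2 ℝ (Fin q → ℝ)).symm with heldef
    set u := el (G.mulVec h) with hudef
    set a := el (Ψ 0) with hadef
    have hN1 : Real.sqrt (∑ i, (G.mulVec h i - Ψ 0 i) ^ 2) = ‖u - a‖ := by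
      rw [hudef, hadef, ← map_sub, ← sqrtSum_eq_norm]
      simp
    have hN2 : Real.sqrt (∑ i, (-(G.mulVec h i) - Ψ 0 i) ^ 2) = ‖u + a‖ := by
      have : ‖u + a‖ = ‖-(u + a)‖ := (norm_neg _).symm
      rw [this, show -(u + a) = -u - a by abel, hudef, hadef, ← map_neg, ← map_sub,
        ← sqrtSum_eq_norm]
      simp
    have hN0 : Real.sqrt (∑ i, (G.mulVec h i) ^ 2) = ‖u‖ := by
      rw [hudef, ← sqrtSum_eq_norm]
    have hkey : ‖u‖ ≤ max ‖u - a‖ ‖u + a‖ := by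
      have h1 : ‖u + u‖ ≤ ‖u - a‖ + ‖u + a‖ := by
        calc ‖u + u‖ = ‖(u - a) + (u + a)‖ := by rw [show (u - a) + (u + a) = u + u by abel]
          _ ≤ ‖u - a‖ + ‖u + a‖ := norm_add_le _ _
      have h2 : ‖u + u‖ = 2 * ‖u‖ := by
        rw [show u + u = (2 : ℝ) • u from (two_smul ℝ u).symm, norm_smul]
        simp
      rcases le_total ‖u - a‖ ‖u + a‖ with hc | hc
      · rw [max_eq_right hc]; linarith
      · rw [max_eq_left hc]; linarith
    rcases le_total ‖u - a‖ ‖u + a‖ with hc | hc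
    · -- use -h
      refine le_trans ?_ (le_iSup_of_le (-h) (le_iSup_of_le hw' le_rfl))
      have hbody : ENNReal.ofReal
          (Real.sqrt (∑ i, (G.mulVec (-h) i - Ψ (D.mulVec (-h)) i) ^ 2)
            / Real.sqrt ((-h) ⬝ᵥ W.mulVec (-h)))
          = ENNReal.ofReal (‖u + a‖ / Real.sqrt (h ⬝ᵥ W.mulVec h)) := by
        rw [show D.mulVec (-h) = 0 by rw [mulVec_neg, hDh, neg_zero]]
        rw [show ((-h) ⬝ᵥ W.mulVec (-h)) = h ⬝ᵥ W.mulVec h by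
          simp [mulVec_neg, dotProduct_neg, neg_dotProduct]]
        rw [← hN2]
        congr 3
        exact Finset.sum_congr rfl fun i _ => by simp [mulVec_neg]
      rw [hbody]
      refine ENNReal.ofReal_le_ofReal ?_
      rw [hN0]
      have : ‖u‖ ≤ ‖u + a‖ := hkey.trans (by rw [max_eq_right hc])
      gcongr
    · -- use h
      refine le_trans ?_ (le_iSup_of_le h (le_iSup_of_le hw le_rfl))
      have hbody : ENNReal.ofReal
          (Real.sqrt (∑ i, (G.mulVec h i - Ψ (D.mulVec h) i) ^ 2)
            / Real.sqrt (h ⬝ᵥ W.mulVec h))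
          = ENNReal.ofReal (‖u - a‖ / Real.sqrt (h ⬝ᵥ W.mulVec h)) := by
        rw [hDh, ← hN1]
      rw [hbody]
      refine ENNReal.ofReal_le_ofReal ?_
      rw [hN0]
      have : ‖u‖ ≤ ‖u - a‖ := hkey.trans (by rw [max_eq_left hc])
      gcongr
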